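/- The number of maximal matchings in an undirected cycle with ℓ ≥ 3 edges equals the Perrin number Q_ℓ, where Q_1 = 0, Q_2 = 2, Q_3 = 3, and Q_n = Q_{n-2} + Q_{n-3}. -/
import Mathlib


/-- The Perrin sequence with `perrin 1 = 0`, `perrin 2 = 2`, `perrin 3 = 3` and
`perrin n = perrin (n-2) + perrin (n-3)`. -/
def perrin : ℕ → ℕ
  | 0 => 3
  | 1 => 0
  | 2 => 2
  | 3 => 3
  | n + 4 => perrin (n + 2) + perrin (n + 1)

/-- The cycle graph with `n` edges, on vertices `ZMod n`, with edges `{i, i+1}`. -/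
def cycleGraph (n : ℕ) : SimpleGraph (ZMod n) :=
  SimpleGraph.fromRel (fun u v => v = u + 1)

/-- A matching in a simple graph `G`: a set of edges of `G` that are pairwise
vertex-disjoint (the empty set is allowed). -/
def IsMatching {V : Type*} (G : SimpleGraph V) (M : Set (Sym2 V)) : Prop :=
  M ⊆ G.edgeSet ∧ ∀ e ∈ M, ∀ f ∈ M, e ≠ f → ∀ v : V, ¬(v ∈ e ∧ v ∈ f)

/-- A maximal matching: a matching not properly contained in any other matching. -/
def IsMaximalMatching {V : Type*} (G : SimpleGraph V) (M : Set (Sym2 V)) : Prop :=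
  IsMatching G M ∧ ∀ M' : Set (Sym2 V), IsMatching G M' → M ⊆ M' → M' = M

set_option linter.unusedSectionVars false

namespace Stmt7Aux

def R : Fin 3 → Fin 3 → Prop := fun a b =>
  (a = 0 ∧ b = 1) ∨ (a = 1 ∧ b = 2) ∨ (a = 2 ∧ (b = 0 ∨ b = 1))

instance : DecidableRel R := fun a b => by unfold R; infer_instance

def T : Matrix (Fin 3) (Fin 3) ℕ := fun a b => if R a b then 1 else 0

lemma T_cube : T ^ 3 = 1 + T := by decide

lemma trace_perrin : ∀ n, (T ^ n).trace = perrin n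
  | 0 => by decide
  | 1 => by decide
  | 2 => by decide
  | 3 => by decide
  | (n + 4) => by
      have h : T ^ (n + 4) = T ^ (n + 1) + T ^ (n + 2) := by
        have h2 : T ^ (n + 4) = T ^ (n + 1) * T ^ 3 := (pow_add T (n + 1) 3)
        rw [h2, T_cube, mul_add, mul_one, ← pow_succ]
      rw [h, Matrix.trace_add, trace_perrin (n + 1), trace_perrin (n + 2), perrin]
      omega

/-- Walks of length `n` in the digraph `R` from `a` to `b`. -/
abbrev W (n : ℕ) (a b : Fin 3) :=
  {w : Fin (n + 1) → Fin 3 // w 0 = a ∧ w (Fin.last n) = b ∧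
    ∀ i : Fin n, R (w i.castSucc) (w i.succ)}

lemma cardW : ∀ (n : ℕ) (a b : Fin 3), Fintype.card (W n a b) = (T ^ n) a b := by
  intro n
  induction n with
  | zero =>
    intro a b
    rcases eq_or_ne a b with h | h
    · subst h
      rw [pow_zero, Matrix.one_apply_eq]
      rw [Fintype.card_eq_one_iff]
      refine ⟨⟨fun _ => a, rfl, rfl, fun i => i.elim0⟩, ?_⟩
      rintro ⟨w, h0, hl, hc⟩
      apply Subtype.ext
      funext j
      have hj : j = 0 := by omega
      rw [hj]; exact h0
    · rw [pow_zero, Matrix.one_apply_ne h]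
      rw [Fintype.card_eq_zero_iff]
      constructor
      rintro ⟨w, h0, hl, hc⟩
      exact h (h0 ▸ hl ▸ (by rfl : w 0 = w (Fin.last 0)))
  | succ n ih =>
    intro a b
    have e1 : Fintype.card (W (n+1) a b) =
        ∑ c : Fin 3, Fintype.card {w : W (n+1) a b // w.1 (Fin.last n).castSucc = c} := by
      rw [← Fintype.card_sigma]
      exact Fintype.card_congr (Equiv.sigmaFiberEquiv _).symm
    rw [e1, pow_succ, Matrix.mul_apply]
    congr 1
    funext c
    by_cases hR : R c b
    · have hT : T c b = 1 := if_pos hR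
      rw [hT, mul_one]
      rw [← ih a c]
      apply Fintype.card_congr
      refine ⟨?_, ?_, ?_, ?_⟩
      · rintro ⟨⟨w, h0, hl, hc⟩, hfib⟩
        refine ⟨fun j => w j.castSucc, ?_, hfib, ?_⟩
        · simpa using h0
        · intro i
          have := hc i.castSucc
          rwa [Fin.succ_castSucc] at this
      · rintro ⟨w, h0, hl, hc⟩
        refine ⟨⟨Fin.snoc w b, ?_, ?_, ?_⟩, ?_⟩
        · rw [show (0 : Fin (n+2)) = (0 : Fin (n+1)).castSucc from (Fin.castSucc_zero).symm,
            Fin.snoc_castSucc]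
          exact h0
        · exact Fin.snoc_last _ _
        · intro i
          induction i using Fin.lastCases with
          | last =>
            rw [Fin.succ_last, Fin.snoc_last, Fin.snoc_castSucc, hl]
            exact hR
          | cast j =>
            rw [Fin.succ_castSucc, Fin.snoc_castSucc, Fin.snoc_castSucc]
            exact hc j
        · show (Fin.snoc w b : Fin (n+2) → Fin 3) (Fin.last n).castSucc = c
          rw [Fin.snoc_castSucc]; exact hl
      · rintro ⟨⟨w, h0, hl, hc⟩, hfib⟩
        apply Subtype.ext; apply Subtype.ext
        funext j
        induction j using Fin.lastCases with
        | last => simp only [Fin.snoc_last]; exact hl.symm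
        | cast j => simp only [Fin.snoc_castSucc]
      · rintro ⟨w, h0, hl, hc⟩
        apply Subtype.ext
        funext j
        simp only [Fin.snoc_castSucc]
    · have hT : T c b = 0 := if_neg hR
      rw [hT, mul_zero]
      rw [Fintype.card_eq_zero_iff]
      constructor
      rintro ⟨⟨w, h0, hl, hc⟩, hfib⟩
      apply hR
      have hfib' : w (Fin.last n).castSucc = c := hfib
      have h2 := hc (Fin.last n)
      rw [Fin.succ_last, hl, hfib'] at h2
      exact h2

variable {n : ℕ}

/-- The `i`-th edge of the cycle. -/
def E (i : ZMod n) : Sym2 (ZMod n) := s(i, i + 1)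

section basic
variable (hn : 3 ≤ n)
include hn

lemma one_ne_zero' : (1 : ZMod n) ≠ 0 := by
  haveI : NeZero n := ⟨by omega⟩
  intro h
  have := Nat.le_of_dvd one_pos ((ZMod.natCast_eq_zero_iff 1 n).mp (by simpa using h))
  omega
  
lemma two_ne_zero' : (2 : ZMod n) ≠ 0 := by
  haveI : NeZero n := ⟨by omega⟩
  intro h
  have := (ZMod.natCast_eq_zero_iff 2 n).mp (by push_cast; simpa using h)
  have := Nat.le_of_dvd (by norm_num) this
  omega

lemma ne_add_one (i : ZMod n) : i ≠ i + 1 := by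
  intro h
  exact one_ne_zero' hn (left_eq_add.mp h)

lemma ne_add_two (i : ZMod n) : i ≠ i + 2 := by
  intro h
  exact two_ne_zero' hn (left_eq_add.mp h)

lemma E_inj {i j : ZMod n} (h : E i = E j) : i = j := by
  rcases Sym2.eq_iff.mp h with ⟨h1, _⟩ | ⟨h1, h2⟩
  · exact h1
  · exfalso
    apply two_ne_zero' hn
    linear_combination h2 - h1

lemma E_mem_edgeSet (i : ZMod n) : E i ∈ (cycleGraph n).edgeSet := by
  rw [E, SimpleGraph.mem_edgeSet, cycleGraph, SimpleGraph.fromRel_adj]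
  exact ⟨ne_add_one hn i, Or.inl rfl⟩

lemma edge_form {x : Sym2 (ZMod n)} (hx : x ∈ (cycleGraph n).edgeSet) : ∃ i, x = E i := by
  induction x with
  | _ u v =>
    rw [SimpleGraph.mem_edgeSet, cycleGraph, SimpleGraph.fromRel_adj] at hx
    rcases hx with ⟨-, h | h⟩
    · exact ⟨u, by rw [E, h]⟩
    · exact ⟨v, by rw [E, ← h, Sym2.eq_swap]⟩

lemma E_disj {i j : ZMod n} (h1 : i ≠ j) (h2 : j ≠ i + 1) (h3 : i ≠ j + 1) (v : ZMod n) :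
    ¬(v ∈ E i ∧ v ∈ E j) := by
  rw [E, E, Sym2.mem_iff, Sym2.mem_iff]
  rintro ⟨hv1 | hv1, hv2 | hv2⟩
  · exact h1 (hv1.symm.trans hv2)
  · exact h3 (hv1.symm.trans hv2)
  · exact h2 (hv2.symm.trans hv1)
  · exact h1 (by linear_combination hv2 - hv1)

lemma E_shares {i j : ZMod n} (v : ZMod n) (hv : v ∈ E i ∧ v ∈ E j) :
    i = j ∨ j = i + 1 ∨ i = j + 1 := by
  by_contra hcon
  push_neg at hcon
  exact E_disj hn hcon.1 hcon.2.1 hcon.2.2 v hv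

lemma char (M : Set (Sym2 (ZMod n))) :
    IsMaximalMatching (cycleGraph n) M ↔
      (∀ x ∈ M, ∃ i, x = E i) ∧ (∀ i, ¬(E i ∈ M ∧ E (i+1) ∈ M)) ∧
      (∀ i : ZMod n, E i ∈ M ∨ E (i+1) ∈ M ∨ E (i+2) ∈ M) := by
  constructor
  · rintro ⟨⟨hsub, hdisj⟩, hmax⟩
    refine ⟨fun x hx => edge_form hn (hsub hx), ?_, ?_⟩
    · rintro i ⟨hi, hi1⟩
      have hne : E i ≠ E (i+1) := fun h => ne_add_one hn i (E_inj hn h)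
      exact hdisj _ hi _ hi1 hne (i+1)
        ⟨Sym2.mem_iff.mpr (Or.inr rfl), Sym2.mem_iff.mpr (Or.inl rfl)⟩
    · intro i
      by_contra hcon
      push_neg at hcon
      obtain ⟨g0, g1, g2⟩ := hcon
      -- M ∪ {E (i+1)} is a matching
      have hM' : IsMatching (cycleGraph n) (M ∪ {E (i+1)}) := by
        constructor
        · rintro x (hx | hx)
          · exact hsub hx
          · rw [Set.mem_singleton_iff] at hx
            rw [hx]; exact E_mem_edgeSet hn _
        · rintro x (hx | hx) y (hy | hy) hxy v hv
          · exact hdisj x hx y hy hxy v hv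
          · rw [Set.mem_singleton_iff] at hy; subst hy
            obtain ⟨j, rfl⟩ := edge_form hn (hsub hx)
            rcases E_shares hn v hv with h | h | h
            · exact g1 (h ▸ hx)
            · exact g0 (by rwa [← add_right_cancel h] at hx)
            · apply g2
              rw [show i + 2 = (i+1)+1 by ring, ← h]
              exact hx
          · rw [Set.mem_singleton_iff] at hx; subst hx
            obtain ⟨j, rfl⟩ := edge_form hn (hsub hy)
            rcases E_shares hn v hv with h | h | h
            · exact g1 (by rwa [← h] at hy)
            · apply g2
              rw [show i + 2 = (i+1)+1 by ring, ← h]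
              exact hy
            · exact g0 (by rwa [← add_right_cancel h] at hy)
          · rw [Set.mem_singleton_iff] at hx hy
            exact hxy (hx.trans hy.symm)
      have := hmax _ hM' Set.subset_union_left
      apply g1
      rw [← this]
      exact Or.inr rfl
  · rintro ⟨hform, hcons, hgap⟩
    have hmatch : IsMatching (cycleGraph n) M := by
      constructor
      · intro x hx
        obtain ⟨i, rfl⟩ := hform x hx
        exact E_mem_edgeSet hn _
      · intro x hx y hy hxy v hv
        obtain ⟨i, rfl⟩ := hform x hx
        obtain ⟨j, rfl⟩ := hform y hy
        rcases E_shares hn v hv with h | h | h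
        · exact hxy (h ▸ rfl)
        · exact hcons i ⟨hx, h ▸ hy⟩
        · exact hcons j ⟨hy, h ▸ hx⟩
    refine ⟨hmatch, ?_⟩
    rintro M' ⟨hsub', hdisj'⟩ hMM'
    apply Set.Subset.antisymm _ hMM'
    intro x hx
    obtain ⟨j, rfl⟩ := edge_form hn (hsub' hx)
    rcases hgap (j - 1) with h | h | h
    · -- E (j-1) ∈ M; shares vertex j with E j
      exfalso
      have hj : E (j - 1) ∈ M' := hMM' h
      have hne : E (j-1) ≠ E j := by
        intro hEq
        exact one_ne_zero' hn (sub_eq_self.mp (E_inj hn hEq))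
      exact hdisj' _ hj _ hx hne j
        ⟨Sym2.mem_iff.mpr (Or.inr (by ring)), Sym2.mem_iff.mpr (Or.inl rfl)⟩
    · rwa [sub_add_cancel] at h
    · -- E (j+1) ∈ M (since j-1+2 = j+1); shares vertex j+1 with E j
      exfalso
      rw [show j - 1 + 2 = j + 1 by ring] at h
      have hj : E (j + 1) ∈ M' := hMM' h
      have hne : E j ≠ E (j+1) := fun hEq => ne_add_one hn j (E_inj hn hEq)
      exact hdisj' _ hx _ hj hne (j+1)
        ⟨Sym2.mem_iff.mpr (Or.inr rfl), Sym2.mem_iff.mpr (Or.inl rfl)⟩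

end basic
abbrev C (n : ℕ) [NeZero n] := {g : ZMod n → Fin 3 // ∀ i, R (g i) (g (i + 1))}

noncomputable def fiberEquiv (n : ℕ) [NeZero n] (hn : 2 ≤ n) (a : Fin 3) :
    {g : C n // g.1 0 = a} ≃ W n a a := by
  haveI : Fact (1 < n) := ⟨hn⟩
  refine ⟨?_, ?_, ?_, ?_⟩
  · rintro ⟨⟨g, hg⟩, h0⟩
    refine ⟨fun j => g ((j.val : ℕ) : ZMod n), ?_, ?_, ?_⟩
    · simpa using h0
    · show g (((Fin.last n).val : ℕ) : ZMod n) = a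
      rw [Fin.val_last, ZMod.natCast_self]
      exact h0
    · intro i
      have := hg ((i.val : ℕ) : ZMod n)
      show R (g ((i.castSucc.val : ℕ) : ZMod n)) (g ((i.succ.val : ℕ) : ZMod n))
      rw [Fin.coe_castSucc, Fin.val_succ, Nat.cast_add, Nat.cast_one]
      exact this
  · rintro ⟨w, h0, hl, hc⟩
    refine ⟨⟨fun x => w (⟨x.val, ZMod.val_lt x⟩ : Fin n).castSucc, ?_⟩, ?_⟩
    · intro i
      have hiv : i.val < n := ZMod.val_lt i
      have hadd : (i + 1).val = (i.val + 1) % n := by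
        rw [ZMod.val_add, ZMod.val_one]
      have hchain := hc ⟨i.val, hiv⟩
      rcases lt_or_eq_of_le (Nat.succ_le_of_lt hiv) with h' | h'
      · have e2 : (⟨(i+1).val, ZMod.val_lt _⟩ : Fin n).castSucc = (⟨i.val, hiv⟩ : Fin n).succ := by
          apply Fin.ext
          simp [hadd, Nat.mod_eq_of_lt h']
        show R (w (⟨i.val, ZMod.val_lt i⟩ : Fin n).castSucc) (w ((⟨(i+1).val, ZMod.val_lt _⟩ : Fin n).castSucc))
        rw [e2]
        exact hchain
      · have e2 : (⟨(i+1).val, ZMod.val_lt _⟩ : Fin n).castSucc = (0 : Fin (n+1)) := by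
          apply Fin.ext
          simp only [Fin.coe_castSucc, Fin.val_zero, hadd]
          rw [show i.val + 1 = n from h']
          exact Nat.mod_self n
        have e3 : (⟨i.val, hiv⟩ : Fin n).succ = Fin.last n := by
          apply Fin.ext
          simp only [Fin.val_succ, Fin.val_last]
          omega
        show R (w (⟨i.val, ZMod.val_lt i⟩ : Fin n).castSucc) (w ((⟨(i+1).val, ZMod.val_lt _⟩ : Fin n).castSucc))
        rw [e2, h0, ← hl, ← e3]
        exact hchain
    · show w (⟨(0 : ZMod n).val, ZMod.val_lt _⟩ : Fin n).castSucc = a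
      have e : (⟨(0 : ZMod n).val, ZMod.val_lt _⟩ : Fin n).castSucc = (0 : Fin (n+1)) := by
        apply Fin.ext
        simp
      rw [e]; exact h0
  · rintro ⟨⟨g, hg⟩, h0⟩
    apply Subtype.ext; apply Subtype.ext
    funext x
    show g ((((⟨x.val, ZMod.val_lt x⟩ : Fin n).castSucc.val : ℕ)) : ZMod n) = g x
    congr 1
    rw [Fin.coe_castSucc]
    show ((x.val : ℕ) : ZMod n) = x
    simp [ZMod.natCast_val, ZMod.cast_id]
  · rintro ⟨w, h0, hl, hc⟩
    apply Subtype.ext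
    funext j
    show w (⟨((j.val : ℕ) : ZMod n).val, ZMod.val_lt _⟩ : Fin n).castSucc = w j
    have hjle : j.val ≤ n := Nat.lt_succ_iff.mp j.isLt
    rcases lt_or_eq_of_le hjle with h' | h'
    · have e : (⟨((j.val : ℕ) : ZMod n).val, ZMod.val_lt _⟩ : Fin n).castSucc = j := by
        apply Fin.ext
        simp [ZMod.val_natCast, Nat.mod_eq_of_lt h']
      rw [e]
    · have e : (⟨((j.val : ℕ) : ZMod n).val, ZMod.val_lt _⟩ : Fin n).castSucc = (0 : Fin (n+1)) := by
        apply Fin.ext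
        simp [ZMod.val_natCast, h']
      have e2 : j = Fin.last n := by apply Fin.ext; simp [h']
      rw [e, e2, h0, hl]

lemma cardC (n : ℕ) [NeZero n] (hn : 2 ≤ n) :
    Fintype.card (C n) = (T ^ n).trace := by
  have e1 : Fintype.card (C n) = ∑ a : Fin 3, Fintype.card {g : C n // g.1 0 = a} := by
    rw [← Fintype.card_sigma]
    exact Fintype.card_congr (Equiv.sigmaFiberEquiv fun g : C n => g.1 0).symm
  rw [e1]
  have e2 : ∀ a : Fin 3, Fintype.card {g : C n // g.1 0 = a} = (T ^ n) a a := by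
    intro a
    rw [Fintype.card_congr (fiberEquiv n hn a), cardW]
  simp only [e2]
  rfl

section equivs
variable {n : ℕ}

abbrev Sset (n : ℕ) := {S : Set (ZMod n) //
  (∀ i : ZMod n, ¬(i ∈ S ∧ i + 1 ∈ S)) ∧ (∀ i : ZMod n, i ∈ S ∨ i + 1 ∈ S ∨ i + 2 ∈ S)}

abbrev Bset (n : ℕ) := {f : ZMod n → Bool //
  (∀ i, ¬(f i = true ∧ f (i + 1) = true)) ∧ (∀ i, f i = true ∨ f (i + 1) = true ∨ f (i + 2) = true)}

lemma E_injective (hn : 3 ≤ n) : Function.Injective (E (n := n)) :=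
  fun _ _ h => E_inj hn h

noncomputable def equivMS (hn : 3 ≤ n) :
    {M : Set (Sym2 (ZMod n)) // IsMaximalMatching (cycleGraph n) M} ≃ Sset n := by
  refine ⟨fun M => ⟨{i | E i ∈ M.1}, ((char hn M.1).mp M.2).2.1, ((char hn M.1).mp M.2).2.2⟩,
    fun S => ⟨E '' S.1, (char hn _).mpr ⟨?_, ?_, ?_⟩⟩, ?_, ?_⟩
  · rintro x ⟨i, hi, rfl⟩
    exact ⟨i, rfl⟩
  · intro i
    rw [(E_injective hn).mem_set_image, (E_injective hn).mem_set_image]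
    exact S.2.1 i
  · intro i
    rw [(E_injective hn).mem_set_image, (E_injective hn).mem_set_image,
      (E_injective hn).mem_set_image]
    exact S.2.2 i
  · rintro ⟨M, hM⟩
    apply Subtype.ext
    show E '' {i | E i ∈ M} = M
    ext x
    constructor
    · rintro ⟨i, hi, rfl⟩
      exact hi
    · intro hx
      obtain ⟨i, rfl⟩ := ((char hn M).mp hM).1 x hx
      exact ⟨i, hx, rfl⟩
  · rintro ⟨S, hc, hg⟩
    apply Subtype.ext
    show {i | E i ∈ E '' S} = S
    ext i
    exact (E_injective hn).mem_set_image

noncomputable def equivSB (n : ℕ) : Sset n ≃ Bset n := by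
  refine ⟨fun S => ⟨fun i => @decide (i ∈ S.1) (Classical.propDecidable _), ?_, ?_⟩,
    fun f => ⟨{i | f.1 i = true}, f.2.1, f.2.2⟩, ?_, ?_⟩
  · intro i
    simp only [decide_eq_true_eq]
    exact S.2.1 i
  · intro i
    simp only [decide_eq_true_eq]
    exact S.2.2 i
  · rintro ⟨S, hc, hg⟩
    apply Subtype.ext
    show {i | @decide (i ∈ S) (Classical.propDecidable _) = true} = S
    ext i
    simp only [Set.mem_setOf_eq, decide_eq_true_eq]
  · rintro ⟨f, hc, hg⟩
    apply Subtype.ext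
    funext i
    show @decide (f i = true) (Classical.propDecidable _) = f i
    cases hb : f i
    · exact @decide_eq_false _ (Classical.propDecidable _) (by simp)
    · exact @decide_eq_true _ (Classical.propDecidable _) rfl

def equivBC (n : ℕ) [NeZero n] : Bset n ≃ C n := by
  refine ⟨fun f => ⟨fun i => if f.1 i = true then 2 else if f.1 (i + 1) = true then 1 else 0, ?_⟩,
    fun g => ⟨fun i => decide (g.1 i = 2), ?_, ?_⟩, ?_, ?_⟩
  · intro i
    obtain ⟨f, hc, hg⟩ := f
    show R (if f i = true then (2:Fin 3) else if f (i + 1) = true then 1 else 0)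
      (if f (i + 1) = true then (2:Fin 3) else if f (i + 1 + 1) = true then 1 else 0)
    have e12 : i + 1 + 1 = i + 2 := by ring
    rw [e12]
    cases hb0 : f i <;> cases hb1 : f (i + 1) <;> cases hb2 : f (i + 2)
    · exact absurd (hg i) (by simp [hb0, hb1, hb2])
    · simp only [hb0, hb1, hb2, if_true, if_false]
      simp [R]
    · simp only [hb0, hb1, hb2, if_true, if_false]
      simp [R]
    · simp only [hb0, hb1, hb2, if_true, if_false]
      simp [R]
    · simp only [hb0, hb1, hb2, if_true, if_false]
      simp [R]
    · simp only [hb0, hb1, hb2, if_true, if_false]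
      simp [R]
    · exact absurd ⟨hb0, hb1⟩ (hc i)
    · exact absurd ⟨hb0, hb1⟩ (hc i)
  · rintro i ⟨h1, h2⟩
    obtain ⟨g, hg⟩ := g
    rw [decide_eq_true_eq] at h1 h2
    rcases hg i with ⟨a, b⟩ | ⟨a, b⟩ | ⟨a, b⟩ <;> simp_all
  · intro i
    obtain ⟨g, hg⟩ := g
    simp only at *
    by_contra hcon
    push_neg at hcon
    obtain ⟨h0, h1, h2⟩ := hcon
    have e12 : i + 1 + 1 = i + 2 := by ring
    have c1 := hg i
    have c2 := hg (i + 1)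
    rw [e12] at c2
    simp only [Bool.not_eq_true, decide_eq_false_iff_not] at h0 h1 h2
    rcases c1 with ⟨a, b⟩ | ⟨a, b⟩ | ⟨a, b⟩
    · rcases c2 with ⟨a', b'⟩ | ⟨a', b'⟩ | ⟨a', b'⟩ <;> simp_all
    · exact h1 b
    · exact h0 a
  · rintro ⟨f, hc, hg⟩
    apply Subtype.ext
    funext i
    show decide ((if f i = true then (2:Fin 3) else if f (i+1) = true then 1 else 0) = 2) = f i
    cases hb0 : f i <;> cases hb1 : f (i + 1) <;> simp [hb0, hb1]
  · rintro ⟨g, hg⟩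
    apply Subtype.ext
    funext i
    show (if decide (g i = 2) = true then (2:Fin 3)
      else if decide (g (i+1) = 2) = true then 1 else 0) = g i
    rcases hg i with ⟨a, b⟩ | ⟨a, b⟩ | ⟨a, b | b⟩ <;> simp [a, b]

end equivs
end Stmt7Aux

open Stmt7Aux in
/-- The number of maximal matchings in an undirected cycle with `ℓ ≥ 3` edges
equals the Perrin number `Q_ℓ`. -/
theorem stmt_7 (ℓ : ℕ) (hℓ : 3 ≤ ℓ) :
    Nat.card {M : Set (Sym2 (ZMod ℓ)) // IsMaximalMatching (cycleGraph ℓ) M} =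
    perrin ℓ := by
  haveI : NeZero ℓ := ⟨by omega⟩
  have h1 : Nat.card {M : Set (Sym2 (ZMod ℓ)) // IsMaximalMatching (cycleGraph ℓ) M}
      = Nat.card (C ℓ) :=
    Nat.card_congr (((equivMS hℓ).trans (equivSB ℓ)).trans (equivBC ℓ))
  rw [h1, Nat.card_eq_fintype_card, cardC ℓ (by omega), trace_perrin]
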